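/- Let G be a network, f̂ a pseudo-flow on G, and f′ a feasible maximum s–t flow in the residual graph G_{f̂}. Then f = f̂ + f′ (interpreted edge-wise, with backward residual flow subtracting from f̂) is a cut-saturating pseudo-flow on G: it satisfies capacity constraints, has the same excesses and deficits as f̂ at every non-terminal vertex, and saturates some s–t cut of G. -/

import Mathlib

open Finset

/-- A flow network on vertex set `V`: integral capacities, a source `s` and a sink `t`. -/
structure Network (V : Type) where
  c : V → V → ℤ
  s : V
  t : V
  st_ne : s ≠ t
  cap_nonneg : ∀ u v, 0 ≤ c u v

variable {V : Type} [Fintype V] [DecidableEq V]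

/-- A pseudo-flow: capacity constraints only. -/
def IsPseudoflow (N : Network V) (f : V → V → ℤ) : Prop :=
  ∀ u v, 0 ≤ f u v ∧ f u v ≤ N.c u v

def inflow (f : V → V → ℤ) (u : V) : ℤ := ∑ v, f v u
def outflow (f : V → V → ℤ) (u : V) : ℤ := ∑ v, f u v
def netFlow (f : V → V → ℤ) (u : V) : ℤ := inflow f u - outflow f u
def exc (f : V → V → ℤ) (u : V) : ℤ := max (netFlow f u) 0
def deficit (f : V → V → ℤ) (u : V) : ℤ := max (- netFlow f u) 0

/-- A pre-flow: pseudo-flow with nonnegative excess at every non-terminal vertex. -/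
def IsPreflow (N : Network V) (f : V → V → ℤ) : Prop :=
  IsPseudoflow N f ∧ ∀ u, u ≠ N.s → u ≠ N.t → 0 ≤ netFlow f u

/-- A feasible flow: pseudo-flow satisfying conservation at non-terminals. -/
def IsFlow (N : Network V) (f : V → V → ℤ) : Prop :=
  IsPseudoflow N f ∧ ∀ u, u ≠ N.s → u ≠ N.t → netFlow f u = 0

/-- Value of a flow: net flow out of the source. -/
def flowValue (N : Network V) (f : V → V → ℤ) : ℤ := outflow f N.s - inflow f N.s

/-- Residual edge `(u,v)`: either the forward edge `(u,v)` is unsaturated, or the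
backward edge of `(v,u)` carries positive flow. -/
def ResEdge (N : Network V) (f : V → V → ℤ) (u v : V) : Prop :=
  f u v < N.c u v ∨ 0 < f v u

/-- Reachability in the residual graph. -/
def ResReach (N : Network V) (f : V → V → ℤ) : V → V → Prop :=
  Relation.ReflTransGen (ResEdge N f)

/-- Edge of the underlying network. -/
def GEdge (N : Network V) (u v : V) : Prop := 0 < N.c u v

/-- `f` saturates the cut `δ(S,T)`: every edge from `S` to `T` is at capacity and
every edge from `T` to `S` carries zero flow. -/
def SaturatesCut (N : Network V) (f : V → V → ℤ) (S T : Finset V) : Prop :=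
  ∀ u ∈ S, ∀ v ∈ T, f u v = N.c u v ∧ f v u = 0

/-- `(S,T)` is an s–t cut partition of the vertices. -/
def IsCutPartition (N : Network V) (S T : Finset V) : Prop :=
  S ∪ T = Finset.univ ∧ Disjoint S T ∧ N.s ∈ S ∧ N.t ∈ T

/-- Capacity of the cut `δ(S,T)`. -/
def cutCap (N : Network V) (S T : Finset V) : ℤ := ∑ u ∈ S, ∑ v ∈ T, N.c u v

/-- Valid heights for Push-Relabel: `h s = n`, `h t = 0`, and `h u ≤ h v + 1`
for every residual edge `(u,v)`. -/
def ValidHeights (N : Network V) (f : V → V → ℤ) (h : V → ℕ) : Prop :=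
  h N.s = Fintype.card V ∧ h N.t = 0 ∧ ∀ u v, ResEdge N f u v → h u ≤ h v + 1

/-- A feasible flow on the residual graph `G_{f̂}`, given as a pair: `fwd` on the
forward residual copies (capacity `c - f̂`) and `bwd` on the backward residual
copies (`bwd u v` flows on the backward copy of edge `(v,u)`, capacity `f̂ v u`),
with conservation at all non-terminals. -/
def ResFlowPair (N : Network V) (fh fwd bwd : V → V → ℤ) : Prop :=
  (∀ u v, 0 ≤ fwd u v ∧ fwd u v ≤ N.c u v - fh u v) ∧
  (∀ u v, 0 ≤ bwd u v ∧ bwd u v ≤ fh v u) ∧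
  (∀ u, u ≠ N.s → u ≠ N.t → (∑ v, (fwd v u + bwd v u)) = ∑ v, (fwd u v + bwd u v))

/-- Value of a residual flow pair: net flow out of `s` in the residual graph. -/
def resVal (N : Network V) (fwd bwd : V → V → ℤ) : ℤ :=
  (∑ v, (fwd N.s v + bwd N.s v)) - ∑ v, (fwd v N.s + bwd v N.s)

set_option linter.unusedSectionVars false

def comb (fh fwd bwd : V → V → ℤ) : V → V → ℤ :=
  fun u v => fh u v + fwd u v - bwd v u

def rcaps (N : Network V) (fh fwd bwd : V → V → ℤ) : Prop :=
  (∀ u v, 0 ≤ fwd u v ∧ fwd u v ≤ N.c u v - fh u v) ∧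
  (∀ u v, 0 ≤ bwd u v ∧ bwd u v ≤ fh v u)

def netRes (fwd bwd : V → V → ℤ) (w : V) : ℤ :=
  (∑ x, (fwd x w + bwd x w)) - ∑ x, (fwd w x + bwd w x)

lemma sum_ind1 (u v w : V) :
    ∑ x : V, (if x = u ∧ w = v then (1:ℤ) else 0) = if w = v then 1 else 0 := by
  by_cases h : w = v <;> simp [h]

lemma sum_ind2 (u v w : V) :
    ∑ x : V, (if w = u ∧ x = v then (1:ℤ) else 0) = if w = u then 1 else 0 := by
  by_cases h : w = u <;> simp [h]

lemma ite_and_nonneg (p q : Prop) [Decidable p] [Decidable q] :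
    (0:ℤ) ≤ if p ∧ q then 1 else 0 := by positivity

lemma step (N : Network V) (fh fwd bwd : V → V → ℤ)
    (hcap : rcaps N fh fwd bwd) (u v : V)
    (he : ResEdge N (comb fh fwd bwd) u v) :
    ∃ fwd' bwd', rcaps N fh fwd' bwd' ∧
      (∀ w, netRes fwd' bwd' w
          = netRes fwd bwd w + (if w = v then 1 else 0) - (if w = u then 1 else 0)) ∧
      (∀ x y, ¬(x = u ∧ y = v) → ResEdge N (comb fh fwd bwd) x y →
        ResEdge N (comb fh fwd' bwd') x y) := by
  obtain ⟨hf, hb⟩ := hcap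
  rcases he with he | he
  · -- forward: comb u v < c u v
    by_cases h : fwd u v < N.c u v - fh u v
    · refine ⟨fun a b => fwd a b + (if a = u ∧ b = v then 1 else 0), bwd, ⟨?_, hb⟩, ?_, ?_⟩
      · intro a b
        rcases hf a b with ⟨h1, h2⟩
        dsimp only
        constructor <;> split_ifs with hab
        · linarith
        · linarith
        · obtain ⟨rfl, rfl⟩ := hab; linarith
        · linarith
      · intro w
        simp only [netRes, Finset.sum_add_distrib, sum_ind1, sum_ind2]
        ring
      · intro x y hxy hedge
        have hz : (if x = u ∧ y = v then (1:ℤ) else 0) = 0 := if_neg hxy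
        rcases hedge with hedge | hedge
        · left; simp only [comb] at hedge ⊢; linarith
        · right; simp only [comb] at hedge ⊢
          have := ite_and_nonneg (y = u) (x = v)
          linarith
    · -- decrease bwd v u
      have hbvu : 0 < bwd v u := by
        have h1 := (hf u v).2
        simp only [comb] at he
        linarith
      refine ⟨fwd, fun a b => bwd a b - (if a = v ∧ b = u then 1 else 0), ⟨hf, ?_⟩, ?_, ?_⟩
      · intro a b
        rcases hb a b with ⟨h1, h2⟩
        dsimp only
        constructor <;> split_ifs with hab
        · obtain ⟨rfl, rfl⟩ := hab; linarith
        · linarith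
        · linarith
        · linarith
      · intro w
        simp only [netRes, Finset.sum_sub_distrib, Finset.sum_add_distrib, sum_ind1, sum_ind2]
        ring
      · intro x y hxy hedge
        have hz : (if y = v ∧ x = u then (1:ℤ) else 0) = 0 :=
          if_neg (fun ⟨h1, h2⟩ => hxy ⟨h2, h1⟩)
        rcases hedge with hedge | hedge
        · left; simp only [comb] at hedge ⊢; linarith
        · right; simp only [comb] at hedge ⊢
          have := ite_and_nonneg (x = v) (y = u)
          linarith
  · -- backward: 0 < comb v u
    by_cases h : 0 < fwd v u
    · refine ⟨fun a b => fwd a b - (if a = v ∧ b = u then 1 else 0), bwd, ⟨?_, hb⟩, ?_, ?_⟩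
      · intro a b
        rcases hf a b with ⟨h1, h2⟩
        dsimp only
        constructor <;> split_ifs with hab
        · obtain ⟨rfl, rfl⟩ := hab; linarith
        · linarith
        · linarith
        · linarith
      · intro w
        simp only [netRes, Finset.sum_sub_distrib, Finset.sum_add_distrib, sum_ind1, sum_ind2]
        ring
      · intro x y hxy hedge
        have hz : (if y = v ∧ x = u then (1:ℤ) else 0) = 0 :=
          if_neg (fun ⟨h1, h2⟩ => hxy ⟨h2, h1⟩)
        rcases hedge with hedge | hedge
        · left; simp only [comb] at hedge ⊢
          have := ite_and_nonneg (x = v) (y = u)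
          linarith
        · right; simp only [comb] at hedge ⊢; linarith
    · have hbuv : bwd u v < fh v u := by
        have h1 := (hf v u).1
        simp only [comb] at he
        have h2 : fwd v u ≤ 0 := not_lt.1 h
        linarith
      refine ⟨fwd, fun a b => bwd a b + (if a = u ∧ b = v then 1 else 0), ⟨hf, ?_⟩, ?_, ?_⟩
      · intro a b
        rcases hb a b with ⟨h1, h2⟩
        dsimp only
        constructor <;> split_ifs with hab
        · linarith
        · linarith
        · obtain ⟨rfl, rfl⟩ := hab; linarith
        · linarith
      · intro w
        simp only [netRes, Finset.sum_add_distrib, sum_ind1, sum_ind2]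
        ring
      · intro x y hxy hedge
        have hz : (if x = u ∧ y = v then (1:ℤ) else 0) = 0 := if_neg hxy
        rcases hedge with hedge | hedge
        · left; simp only [comb] at hedge ⊢
          have := ite_and_nonneg (y = u) (x = v)
          linarith
        · right; simp only [comb] at hedge ⊢; linarith

lemma chain_avoid (N : Network V) (g g' : V → V → ℤ) (u v : V)
    (hpres : ∀ x y, ¬(x = u ∧ y = v) → ResEdge N g x y → ResEdge N g' x y) :
    ∀ (l : List V) (x : V), List.Chain (ResEdge N g) x l →
      ∃ z l', (z = x ∨ z = v) ∧ List.Chain (ResEdge N g') z l' ∧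
        (z :: l').getLast (List.cons_ne_nil _ _) = (x :: l).getLast (List.cons_ne_nil _ _) ∧
        l'.length ≤ l.length := by
  intro l
  induction l with
  | nil => intro x _; exact ⟨x, [], Or.inl rfl, List.Chain.nil, rfl, le_rfl⟩
  | cons y ys ih =>
    intro x hch
    rcases List.chain_cons.1 hch with ⟨hxy, hys⟩
    obtain ⟨z, l', hz, hch', hlast, hlen⟩ := ih y hys
    rcases hz with h1 | h1
    · rw [h1] at hch' hlast
      by_cases hc : x = u ∧ y = v
      · exact ⟨y, l', Or.inr hc.2, hch',
          by rw [List.getLast_cons_cons]; exact hlast, by simp; omega⟩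
      · exact ⟨x, y :: l', Or.inl rfl,
          List.chain_cons.2 ⟨hpres x y hc hxy, hch'⟩,
          by rw [List.getLast_cons_cons, List.getLast_cons_cons]; exact hlast,
          by simpa using hlen⟩
    · exact ⟨z, l', Or.inr h1, hch',
        by rw [List.getLast_cons_cons]; exact hlast, by simp; omega⟩

lemma aug (N : Network V) (fh : V → V → ℤ) :
    ∀ (n : ℕ) (fwd bwd : V → V → ℤ), rcaps N fh fwd bwd →
      ∀ (u : V) (l : List V), List.Chain (ResEdge N (comb fh fwd bwd)) u l →
        (u :: l).getLast (List.cons_ne_nil _ _) = N.t → l.length ≤ n →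
        ∃ fwd' bwd', rcaps N fh fwd' bwd' ∧
          ∀ w, netRes fwd' bwd' w
            = netRes fwd bwd w + (if w = N.t then 1 else 0) - (if w = u then 1 else 0) := by
  intro n
  induction n with
  | zero =>
    intro fwd bwd hcap u l hch hlast hlen
    have hl : l = [] := List.length_eq_zero_iff.1 (Nat.le_zero.1 hlen)
    subst hl
    have hu : u = N.t := hlast
    exact ⟨fwd, bwd, hcap, fun w => by rw [hu]; ring⟩
  | succ n ih =>
    intro fwd bwd hcap u l hch hlast hlen
    cases l with
    | nil =>
      have hu : u = N.t := hlast
      exact ⟨fwd, bwd, hcap, fun w => by rw [hu]; ring⟩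
    | cons y ys =>
      rcases List.chain_cons.1 hch with ⟨hxy, hys⟩
      obtain ⟨fwd', bwd', hcap', hnet, hpres⟩ := step N fh fwd bwd hcap u y hxy
      obtain ⟨z, l', hz, hch', hlast', hlen'⟩ :=
        chain_avoid N (comb fh fwd bwd) (comb fh fwd' bwd') u y hpres ys y hys
      have hzy : z = y := by rcases hz with h | h <;> exact h
      subst hzy
      have hlast2 : (z :: l').getLast (List.cons_ne_nil _ _) = N.t := by
        rw [hlast']
        rw [List.getLast_cons_cons] at hlast
        exact hlast
      have hlen2 : l'.length ≤ n := by
        simp only [List.length_cons] at hlen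
        omega
      obtain ⟨fwd'', bwd'', hcap'', hnet''⟩ := ih fwd' bwd' hcap' z l' hch' hlast2 hlen2
      refine ⟨fwd'', bwd'', hcap'', fun w => ?_⟩
      rw [hnet'' w, hnet w]
      ring

/-- adding a maximum feasible flow of the residual graph `G_{f̂}` to
the pseudo-flow `f̂` (forward flow adds, backward flow subtracts) yields a
cut-saturating pseudo-flow with the same excesses and deficits at non-terminals. -/
theorem stmt10 (N : Network V) (fh fwd bwd : V → V → ℤ)
    (hpf : IsPseudoflow N fh)
    (hres : ResFlowPair N fh fwd bwd)
    (hmax : ∀ fwd' bwd', ResFlowPair N fh fwd' bwd' →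
      resVal N fwd' bwd' ≤ resVal N fwd bwd) :
    IsPseudoflow N (fun u v => fh u v + fwd u v - bwd v u) ∧
    (∀ u, u ≠ N.s → u ≠ N.t →
      exc (fun a b => fh a b + fwd a b - bwd b a) u = exc fh u ∧
      deficit (fun a b => fh a b + fwd a b - bwd b a) u = deficit fh u) ∧
    ∃ S T : Finset V, IsCutPartition N S T ∧
      SaturatesCut N (fun a b => fh a b + fwd a b - bwd b a) S T := by
  classical
  obtain ⟨hfc, hbc, hcons⟩ := hres
  set f : V → V → ℤ := fun a b => fh a b + fwd a b - bwd b a with hf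
  have hcomb : comb fh fwd bwd = f := rfl
  -- pseudoflow
  have hpsf : IsPseudoflow N f := by
    intro a b
    rcases hfc a b with ⟨h1, h2⟩
    rcases hbc b a with ⟨h3, h4⟩
    rcases hpf a b with ⟨h5, h6⟩
    constructor <;> simp only [hf] <;> linarith
  -- netFlow relation
  have hnetf : ∀ u, netFlow f u = netFlow fh u + netRes fwd bwd u := by
    intro u
    simp only [netFlow, inflow, outflow, netRes, hf, Finset.sum_add_distrib,
      Finset.sum_sub_distrib]
    ring
  have hnr0 : ∀ u, u ≠ N.s → u ≠ N.t → netRes fwd bwd u = 0 := by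
    intro u hs ht
    simp only [netRes, hcons u hs ht, sub_self]
  refine ⟨hpsf, ?_, ?_⟩
  · intro u hs ht
    have := hnetf u
    rw [hnr0 u hs ht, add_zero] at this
    constructor <;> simp [exc, deficit, this]
  · -- the cut
    have hsreach : ¬ ResReach N f N.s N.t := by
      intro hreach
      obtain ⟨l, hch, hlast⟩ := List.exists_isChain_cons_of_relationReflTransGen hreach
      rw [← hcomb] at hch
      obtain ⟨fwd', bwd', ⟨hfc', hbc'⟩, hnet'⟩ :=
        aug N fh l.length fwd bwd ⟨hfc, hbc⟩ N.s l hch hlast le_rfl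
      have hpair' : ResFlowPair N fh fwd' bwd' := by
        refine ⟨hfc', hbc', fun u hs ht => ?_⟩
        have h1 := hnet' u
        rw [if_neg ht, if_neg hs, hnr0 u hs ht] at h1
        have : netRes fwd' bwd' u = 0 := by linarith
        simp only [netRes, sub_eq_zero] at this
        exact this
      have hval : resVal N fwd' bwd' = resVal N fwd bwd + 1 := by
        have h1 := hnet' N.s
        rw [if_neg N.st_ne, if_pos rfl] at h1
        simp only [netRes] at h1
        simp only [resVal]
        linarith
      have := hmax fwd' bwd' hpair'
      omega
    refine ⟨Finset.univ.filter (fun v => ¬ ResReach N f v N.t),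
           Finset.univ.filter (fun v => ResReach N f v N.t), ⟨?_, ?_, ?_, ?_⟩, ?_⟩
    · ext x; by_cases h : ResReach N f x N.t <;> simp [h]
    · rw [Finset.disjoint_left]; intro a ha hb; simp at ha hb; exact ha hb
    · simp [hsreach]
    · exact Finset.mem_filter.2 ⟨Finset.mem_univ _, Relation.ReflTransGen.refl⟩
    · intro a ha b hb
      simp only [Finset.mem_filter] at ha hb
      have hnotedge : ¬ ResEdge N f a b := by
        intro he
        exact ha.2 (Relation.ReflTransGen.head he hb.2)
      simp only [ResEdge, not_or, not_lt] at hnotedge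
      rcases hnotedge with ⟨h1, h2⟩
      exact ⟨le_antisymm (hpsf a b).2 h1, le_antisymm h2 (hpsf b a).1⟩
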